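/- Let S ⊂ ℝ be a subring finitely generated as a ℤ-module with field of fractions K, and let Γ ⊂ ℝⁿ be an S-module over K in ℝⁿ (i.e., a free S-module of rank n spanning ℝⁿ with ⟨γ,γ⟩ ∈ K for all γ ∈ Γ). Then every non-zero vector of Γ defines a coincidence reflection of Γ, and every coincidence isometry of Γ decomposes as a product of at most n reflections defined by non-zero elements of Γ. -/

import Mathlib

open Matrix

/-- Two additive subgroups of `ℝⁿ` are commensurate if their intersection has
finite index in both. -/
def Commensurate {n : ℕ} (Γ Γ' : AddSubgroup (Fin n → ℝ)) : Prop :=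
  (Γ'.addSubgroupOf Γ).index ≠ 0 ∧ (Γ.addSubgroupOf Γ').index ≠ 0

/-- The matrix of the reflection `ρ_γ : x ↦ x - 2(⟨x,γ⟩/⟨γ,γ⟩)γ` along `γ`. -/
noncomputable def reflMatrix {n : ℕ} (γ : Fin n → ℝ) : Matrix (Fin n) (Fin n) ℝ :=
  1 - (2 / dotProduct γ γ) • Matrix.vecMulVec γ γ

/-- `Q` (acting on `ℝⁿ` by `x ↦ Q.mulVec x`) is a coincidence isometry of `Γ`:
it is orthogonal and `Γ` is commensurate with its image `Q(Γ)`. -/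
def IsCoincidenceIsometry {n : ℕ} (Γ : AddSubgroup (Fin n → ℝ))
    (Q : Matrix (Fin n) (Fin n) ℝ) : Prop :=
  Q ∈ Matrix.orthogonalGroup (Fin n) ℝ ∧
    Commensurate Γ (Γ.map Q.mulVecLin.toAddMonoidHom)

/-- `Q` is a product of at most `n` reflections along non-zero elements of `Γ`. -/
def IsProdOfAtMostNCoincReflections {n : ℕ} (Γ : AddSubgroup (Fin n → ℝ))
    (Q : Matrix (Fin n) (Fin n) ℝ) : Prop :=
  ∃ k : ℕ, k ≤ n ∧ ∃ g : Fin k → (Fin n → ℝ), (∀ i, g i ∈ Γ ∧ g i ≠ 0) ∧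
    Q = (List.ofFn fun i => reflMatrix (g i)).prod

/-- `b` is an `S`-basis of `Γ` which is also an `ℝ`-basis of `ℝⁿ`; i.e. `Γ` is
a free `S`-module of rank `n` spanning `ℝⁿ` with basis `b`. -/
def IsSBasisOf {n : ℕ} (S : Subring ℝ) (b : Fin n → (Fin n → ℝ))
    (Γ : AddSubgroup (Fin n → ℝ)) : Prop :=
  LinearIndependent ℝ b ∧ Submodule.span ℝ (Set.range b) = ⊤ ∧
    ∀ x, x ∈ Γ ↔ ∃ c : Fin n → ℝ, (∀ i, c i ∈ S) ∧ x = ∑ i, c i • b i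



lemma reflMatrix_mulVec {n : ℕ} (γ x : Fin n → ℝ) :
    (reflMatrix γ).mulVec x = x - (2 * (γ ⬝ᵥ x) / (γ ⬝ᵥ γ)) • γ := by
  have h1 : (vecMulVec γ γ).mulVec x = (γ ⬝ᵥ x) • γ := by
    funext i
    simp only [mulVec, vecMulVec_apply, dotProduct, Pi.smul_apply, smul_eq_mul, Finset.sum_mul,
      Finset.mul_sum]
    congr 1; funext j; ring
  rw [reflMatrix, sub_mulVec, one_mulVec, smul_mulVec, h1, smul_smul]
  congr 1
  rw [div_mul_eq_mul_div, mul_comm]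

lemma vecMulVec_mul_vecMulVec {n : ℕ} (γ : Fin n → ℝ) :
    vecMulVec γ γ * vecMulVec γ γ = (γ ⬝ᵥ γ) • vecMulVec γ γ := by
  ext i j
  simp only [mul_apply, vecMulVec_apply, Matrix.smul_apply, dotProduct, smul_eq_mul, Finset.sum_mul,
    Finset.mul_sum]
  congr 1; funext k; ring

lemma transpose_vecMulVec_self {n : ℕ} (γ : Fin n → ℝ) :
    (vecMulVec γ γ)ᵀ = vecMulVec γ γ := by
  ext i j; simp [vecMulVec_apply, mul_comm]

lemma reflMatrix_transpose {n : ℕ} (γ : Fin n → ℝ) : (reflMatrix γ)ᵀ = reflMatrix γ := by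
  rw [reflMatrix, transpose_sub, transpose_one, transpose_smul, transpose_vecMulVec_self]

lemma reflMatrix_mul_self {n : ℕ} {γ : Fin n → ℝ} (hγ : γ ⬝ᵥ γ ≠ 0) :
    reflMatrix γ * reflMatrix γ = 1 := by
  rw [reflMatrix]
  set t : ℝ := 2 / γ ⬝ᵥ γ
  simp only [sub_mul, mul_sub, one_mul, mul_one, Matrix.mul_smul, Matrix.smul_mul,
    vecMulVec_mul_vecMulVec, smul_smul]
  have : t * (t * (γ ⬝ᵥ γ)) = t + t := by
    field_simp [t]
    simp only [t]; field_simp; norm_num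
  rw [this]
  module

lemma reflMatrix_mem_orthogonal {n : ℕ} {γ : Fin n → ℝ} (hγ : γ ⬝ᵥ γ ≠ 0) :
    reflMatrix γ ∈ Matrix.orthogonalGroup (Fin n) ℝ := by
  rw [Matrix.mem_orthogonalGroup_iff]
  show reflMatrix γ * (reflMatrix γ)ᴴ = 1
  rw [conjTranspose_eq_transpose_of_trivial, reflMatrix_transpose, reflMatrix_mul_self hγ]


private lemma exists_poly_root {d : ℝ} (hd0 : d ≠ 0) :
    ∀ (N : ℕ) (p : Polynomial ℤ), p.natDegree ≤ N → p ≠ 0 → Polynomial.aeval d p = 0 →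
      ∃ q : Polynomial ℤ, q.coeff 0 ≠ 0 ∧ Polynomial.aeval d q = 0 := by
  intro N
  induction N with
  | zero =>
    intro p hdeg hp0 hev
    refine ⟨p, ?_, hev⟩
    intro h0
    apply hp0
    have := Polynomial.eq_C_of_natDegree_le_zero hdeg
    rw [this, h0] at *
    simpa using this
  | succ N ih =>
    intro p hdeg hp0 hev
    by_cases h0 : p.coeff 0 = 0
    · obtain ⟨r, hr⟩ := Polynomial.X_dvd_iff.mpr h0
      have hr0 : r ≠ 0 := by rintro rfl; simp at hr; exact hp0 hr
      have hevr : Polynomial.aeval d r = 0 := by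
        rw [hr] at hev
        simpa [hd0] using hev
      have hdegr : r.natDegree ≤ N := by
        have : p.natDegree = r.natDegree + 1 := by
          rw [hr, Polynomial.natDegree_X_mul hr0]
        omega
      exact ih r hdegr hr0 hevr
    · exact ⟨p, h0, hev⟩

lemma exists_int_multiple (S : Subring ℝ) (hS : Module.Finite ℤ S) {d : ℝ}
    (hd : d ∈ S) (hd0 : d ≠ 0) :
    ∃ (c : ℤ) (s : ℝ), s ∈ S ∧ c ≠ 0 ∧ (c : ℝ) = d * s := by
  have hint : IsIntegral ℤ (⟨d, hd⟩ : S) := IsIntegral.of_finite ℤ _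
  obtain ⟨p, hpm, hpev⟩ := hint
  have hev : Polynomial.aeval d p = 0 := by
    have hpev' : Polynomial.aeval (⟨d, hd⟩ : S) p = 0 := hpev
    have h := Polynomial.aeval_algHom_apply (S.subtype.toIntAlgHom) (⟨d, hd⟩ : S) p
    rw [hpev'] at h
    simpa using h
  obtain ⟨q, hq0, hqev⟩ := exists_poly_root hd0 p.natDegree p le_rfl hpm.ne_zero hev
  set m := q.natDegree
  refine ⟨q.coeff 0, -(∑ i ∈ Finset.range m, (q.coeff (i+1) : ℝ) * d ^ i), ?_, hq0, ?_⟩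
  · exact Subring.neg_mem _ (Subring.sum_mem _ fun i _ =>
      Subring.mul_mem _ (intCast_mem S _) (Subring.pow_mem _ hd _))
  · have := Polynomial.aeval_eq_sum_range (p := q) (d : ℝ)
    rw [hqev] at this
    rw [Finset.sum_range_succ'] at this
    simp only [pow_zero, zsmul_eq_mul, mul_one] at this
    have h2 : (q.coeff 0 : ℝ) = -∑ i ∈ Finset.range m, (q.coeff (i+1):ℝ) * d ^ (i+1) := by
      linarith [this]
    rw [h2, mul_neg, Finset.mul_sum]
    congr 1
    refine Finset.sum_congr rfl fun i _ => by ring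


section
variable {n : ℕ} (S : Subring ℝ) (Γ : AddSubgroup (Fin n → ℝ)) (b : Fin n → (Fin n → ℝ))
variable (hmem : ∀ x, x ∈ Γ ↔ ∃ c : Fin n → ℝ, (∀ i, c i ∈ S) ∧ x = ∑ i, c i • b i)

include hmem

lemma basis_mem (i : Fin n) : b i ∈ Γ := by
  rw [hmem]
  refine ⟨fun j => if j = i then 1 else 0, fun j => ?_, ?_⟩
  · by_cases h : j = i <;> simp [h, S.one_mem, S.zero_mem]
  · simp [ite_smul, Finset.sum_ite_eq']

lemma smul_mem_Γ {s : ℝ} (hs : s ∈ S) {x : Fin n → ℝ} (hx : x ∈ Γ) : s • x ∈ Γ := by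
  rw [hmem] at hx ⊢
  obtain ⟨c, hc, rfl⟩ := hx
  refine ⟨fun i => s * c i, fun i => S.mul_mem hs (hc i), ?_⟩
  rw [Finset.smul_sum]
  exact Finset.sum_congr rfl fun i _ => by simp [smul_smul]

lemma gamma_fg (hS : Module.Finite ℤ ↥S) : AddGroup.FG ↥Γ := by
  rw [AddGroup.fg_iff_addSubgroup_fg]
  haveI := hS
  obtain ⟨T, hT⟩ := hS.fg_top
  rw [AddSubgroup.fg_iff]
  set gens : Set (Fin n → ℝ) := (fun p : ↥S × Fin n => (p.1 : ℝ) • b p.2) '' (T ×ˢ (Finset.univ : Finset (Fin n)))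
  refine ⟨gens, le_antisymm ?_ ?_, Set.Finite.image _ ((T.finite_toSet).prod (Finset.finite_toSet _))⟩
  · rw [AddSubgroup.closure_le]
    rintro x ⟨⟨s, i⟩, hp, rfl⟩
    exact smul_mem_Γ S Γ b hmem s.2 (basis_mem S Γ b hmem i)
  · intro x hx
    rw [hmem] at hx
    obtain ⟨c, hc, rfl⟩ := hx
    refine AddSubgroup.sum_mem _ fun i _ => ?_
    have key : ∀ s : ↥S, (s : ℝ) • b i ∈ AddSubgroup.closure gens := by
      intro s
      have hs : s ∈ (⊤ : Submodule ℤ ↥S) := trivial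
      rw [← hT] at hs
      induction hs using Submodule.span_induction with
      | mem t ht =>
        exact AddSubgroup.subset_closure ⟨(t, i), by simpa using ht, rfl⟩
      | zero => rw [ZeroMemClass.coe_zero, zero_smul]; exact zero_mem _
      | add x y _ _ hx hy =>
        rw [Subring.coe_add, add_smul]
        exact AddSubgroup.add_mem _ hx hy
      | smul z t _ ht =>
        have h1 : ((z • t : ↥S) : ℝ) = (z : ℝ) * (t : ℝ) := by push_cast; exact zsmul_eq_mul ((t : ℝ)) z
        have : ((z • t : ↥S) : ℝ) • b i = z • ((t : ℝ) • b i) := by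
          rw [h1, ← Int.cast_smul_eq_zsmul ℝ z ((t : ℝ) • b i), smul_smul]
        rw [this]
        exact AddSubgroup.zsmul_mem _ ht z
    exact key ⟨c i, hc i⟩
end



lemma index_ne_zero_of_nsmul {n : ℕ} (Γ Γ' : AddSubgroup (Fin n → ℝ))
    (hfg : AddGroup.FG ↥Γ) {c : ℕ} (hc : c ≠ 0) (h : ∀ x ∈ Γ, c • x ∈ Γ') :
    (Γ'.addSubgroupOf Γ).index ≠ 0 := by
  haveI := hfg
  haveI : Finite (↥Γ ⧸ Γ'.addSubgroupOf Γ) := by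
    apply AddCommGroup.finite_of_fg_torsion
    intro x
    induction x using QuotientAddGroup.induction_on with
    | H y =>
      rw [isOfFinAddOrder_iff_nsmul_eq_zero]
      refine ⟨c, Nat.pos_of_ne_zero hc, ?_⟩
      rw [← QuotientAddGroup.mk_nsmul]
      rw [QuotientAddGroup.eq_zero_iff]
      show ((c • y : ↥Γ) : Fin n → ℝ) ∈ Γ'
      push_cast
      exact h y y.2
  exact AddSubgroup.index_ne_zero_of_finite


def GoodPair {n : ℕ} (Γ : AddSubgroup (Fin n → ℝ)) (Q : Matrix (Fin n) (Fin n) ℝ) : Prop :=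
  (∃ c : ℕ, c ≠ 0 ∧ ∀ x ∈ Γ, (c : ℝ) • (Q *ᵥ x) ∈ Γ) ∧
  (∃ c : ℕ, c ≠ 0 ∧ ∀ x ∈ Γ, ∃ y ∈ Γ, (c : ℝ) • x = Q *ᵥ y)

lemma mem_map_iff {n : ℕ} (Γ : AddSubgroup (Fin n → ℝ)) (Q : Matrix (Fin n) (Fin n) ℝ)
    (x : Fin n → ℝ) : x ∈ Γ.map Q.mulVecLin.toAddMonoidHom ↔ ∃ y ∈ Γ, Q *ᵥ y = x := by
  simp [AddSubgroup.mem_map, Matrix.mulVecLin_apply]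

lemma coincidence_iff_goodPair {n : ℕ} (Γ : AddSubgroup (Fin n → ℝ))
    (hfg : AddGroup.FG ↥Γ) (Q : Matrix (Fin n) (Fin n) ℝ) :
    IsCoincidenceIsometry Γ Q ↔ Q ∈ Matrix.orthogonalGroup (Fin n) ℝ ∧ GoodPair Γ Q := by
  set Γ' := Γ.map Q.mulVecLin.toAddMonoidHom with hΓ'
  constructor
  · rintro ⟨horth, h1, h2⟩
    refine ⟨horth, ⟨(Γ.addSubgroupOf Γ').index, h2, fun x hx => ?_⟩,
      ⟨(Γ'.addSubgroupOf Γ).index, h1, fun x hx => ?_⟩⟩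
    · have hQx : Q *ᵥ x ∈ Γ' := (mem_map_iff Γ Q _).mpr ⟨x, hx, rfl⟩
      have := AddSubgroup.nsmul_index_mem (Γ.addSubgroupOf Γ') (⟨Q *ᵥ x, hQx⟩ : ↥Γ')
      rw [AddSubgroup.mem_addSubgroupOf] at this
      rw [Nat.cast_smul_eq_nsmul]
      exact this
    · have := AddSubgroup.nsmul_index_mem (Γ'.addSubgroupOf Γ) (⟨x, hx⟩ : ↥Γ)
      rw [AddSubgroup.mem_addSubgroupOf] at this
      have h3 : ((Γ'.addSubgroupOf Γ).index • x) ∈ Γ' := this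
      rw [mem_map_iff] at h3
      obtain ⟨y, hy, hQy⟩ := h3
      exact ⟨y, hy, by rw [Nat.cast_smul_eq_nsmul]; exact hQy.symm⟩
  · rintro ⟨horth, ⟨c1, hc1, h1⟩, ⟨c2, hc2, h2⟩⟩
    refine ⟨horth, ?_, ?_⟩
    · refine index_ne_zero_of_nsmul Γ Γ' hfg hc2 fun x hx => ?_
      obtain ⟨y, hy, hxy⟩ := h2 x hx
      rw [← Nat.cast_smul_eq_nsmul ℝ, hxy]
      exact (mem_map_iff Γ Q _).mpr ⟨y, hy, rfl⟩
    · have hfg' : AddGroup.FG ↥Γ' := by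
        haveI := hfg
        exact AddGroup.fg_of_surjective
          (AddMonoidHom.addSubgroupMap_surjective Q.mulVecLin.toAddMonoidHom Γ)
      refine index_ne_zero_of_nsmul Γ' Γ hfg' hc1 fun x hx => ?_
      rw [mem_map_iff] at hx
      obtain ⟨y, hy, rfl⟩ := hx
      rw [← Nat.cast_smul_eq_nsmul ℝ]
      exact h1 y hy



lemma goodPair_mul {n : ℕ} {Γ : AddSubgroup (Fin n → ℝ)} {Q₁ Q₂ : Matrix (Fin n) (Fin n) ℝ}
    (h₁ : GoodPair Γ Q₁) (h₂ : GoodPair Γ Q₂) : GoodPair Γ (Q₁ * Q₂) := by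
  obtain ⟨⟨c1, hc1, ha1⟩, ⟨d1, hd1, hb1⟩⟩ := h₁
  obtain ⟨⟨c2, hc2, ha2⟩, ⟨d2, hd2, hb2⟩⟩ := h₂
  constructor
  · refine ⟨c1 * c2, mul_ne_zero hc1 hc2, fun x hx => ?_⟩
    have : ((c1 * c2 : ℕ) : ℝ) • ((Q₁ * Q₂) *ᵥ x) = (c1 : ℝ) • (Q₁ *ᵥ ((c2 : ℝ) • (Q₂ *ᵥ x))) := by
      rw [← mulVec_mulVec, mulVec_smul]
      push_cast
      rw [smul_smul]
    rw [this]
    exact ha1 _ (ha2 x hx)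
  · refine ⟨d1 * d2, mul_ne_zero hd1 hd2, fun x hx => ?_⟩
    obtain ⟨y1, hy1, hxy1⟩ := hb1 x hx
    obtain ⟨y2, hy2, hxy2⟩ := hb2 y1 hy1
    refine ⟨y2, hy2, ?_⟩
    have : ((d1 * d2 : ℕ) : ℝ) • x = (d2 : ℝ) • ((d1 : ℝ) • x) := by
      push_cast; rw [smul_smul, mul_comm]
    rw [this, hxy1, ← mulVec_smul, hxy2, mulVec_mulVec]


lemma orth_dot {n : ℕ} {Q : Matrix (Fin n) (Fin n) ℝ}
    (hQ : Q ∈ Matrix.orthogonalGroup (Fin n) ℝ) (x y : Fin n → ℝ) :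
    (Q *ᵥ x) ⬝ᵥ (Q *ᵥ y) = x ⬝ᵥ y := by
  rw [Matrix.mem_orthogonalGroup_iff'] at hQ
  have hQ' : Qᵀ * Q = 1 := by
    simpa using hQ
  calc (Q *ᵥ x) ⬝ᵥ (Q *ᵥ y) = (x ᵥ* Qᵀ) ⬝ᵥ (Q *ᵥ y) := by rw [Matrix.vecMul_transpose]
    _ = ((x ᵥ* Qᵀ) ᵥ* Q) ⬝ᵥ y := by rw [Matrix.dotProduct_mulVec]
    _ = (x ᵥ* (Qᵀ * Q)) ⬝ᵥ y := by rw [Matrix.vecMul_vecMul]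
    _ = x ⬝ᵥ y := by rw [hQ', Matrix.vecMul_one]

lemma eq_one_of_fix {n : ℕ} {Q : Matrix (Fin n) (Fin n) ℝ} {b : Fin n → (Fin n → ℝ)}
    (hspan : Submodule.span ℝ (Set.range b) = ⊤) (hfix : ∀ i, Q *ᵥ (b i) = b i) :
    Q = 1 := by
  have h : Q.mulVecLin = (1 : Matrix (Fin n) (Fin n) ℝ).mulVecLin := by
    apply LinearMap.ext_on_range hspan
    intro i
    simp [Matrix.mulVecLin_apply, hfix i]
  have hinj : Function.Injective (Matrix.mulVecLin :
      Matrix (Fin n) (Fin n) ℝ → ((Fin n → ℝ) →ₗ[ℝ] (Fin n → ℝ))) := by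
    intro A B hAB
    ext i j
    have := congrArg (fun f => f (Pi.single j 1) i) hAB
    simpa [Matrix.mulVecLin_apply, Matrix.mulVec_single] using this
  exact hinj h


section
variable {n : ℕ} (S : Subring ℝ) (K : Subfield ℝ) (Γ : AddSubgroup (Fin n → ℝ))
    (b : Fin n → (Fin n → ℝ))

lemma polarization (hΓK : ∀ γ ∈ Γ, dotProduct γ γ ∈ K) {x y : Fin n → ℝ}
    (hx : x ∈ Γ) (hy : y ∈ Γ) : 2 * (x ⬝ᵥ y) ∈ K := by
  have h := hΓK (x + y) (add_mem hx hy)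
  have e : 2 * (x ⬝ᵥ y) = (x + y) ⬝ᵥ (x + y) - x ⬝ᵥ x - y ⬝ᵥ y := by
    rw [add_dotProduct, dotProduct_add, dotProduct_add, dotProduct_comm y x]
    ring
  rw [e]
  exact K.sub_mem (K.sub_mem h (hΓK x hx)) (hΓK y hy)

lemma refl_goodPair (hS : Module.Finite ℤ ↥S)
    (hK : ∀ x : ℝ, x ∈ K ↔ ∃ a b : ℝ, a ∈ S ∧ b ∈ S ∧ b ≠ 0 ∧ x = a / b)
    (hmem : ∀ x, x ∈ Γ ↔ ∃ c : Fin n → ℝ, (∀ i, c i ∈ S) ∧ x = ∑ i, c i • b i)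
    (hΓK : ∀ γ ∈ Γ, dotProduct γ γ ∈ K)
    {γ : Fin n → ℝ} (hγ : γ ∈ Γ) (hγ0 : γ ≠ 0) : GoodPair Γ (reflMatrix γ) := by
  have hq : γ ⬝ᵥ γ ≠ 0 := fun h => hγ0 (dotProduct_self_eq_zero.mp h)
  set t : Fin n → ℝ := fun i => 2 * (γ ⬝ᵥ b i) / (γ ⬝ᵥ γ) with ht
  have htK : ∀ i, t i ∈ K := fun i =>
    K.div_mem (polarization K Γ hΓK hγ (basis_mem S Γ b hmem i)) (hΓK γ hγ)
  have hchoice : ∀ i, ∃ c : ℤ, c ≠ 0 ∧ (c : ℝ) * t i ∈ S := by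
    intro i
    obtain ⟨a, d, ha, hd, hd0, hadt⟩ := (hK (t i)).mp (htK i)
    obtain ⟨c, s, hs, hc0, hcds⟩ := exists_int_multiple S hS hd hd0
    refine ⟨c, hc0, ?_⟩
    have : (c : ℝ) * t i = s * a := by
      rw [hadt, hcds]
      field_simp
    rw [this]
    exact S.mul_mem hs ha
  choose c hc0 hcS using hchoice
  set C : ℤ := ∏ i, c i with hC
  have hC0 : C ≠ 0 := Finset.prod_ne_zero_iff.mpr fun i _ => hc0 i
  set N : ℕ := C.natAbs with hN
  have hN0 : N ≠ 0 := Int.natAbs_ne_zero.mpr hC0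
  have hNS : ∀ i, (N : ℝ) * t i ∈ S := by
    intro i
    have h1 : (C : ℝ) * t i ∈ S := by
      have : (C : ℝ) = (c i : ℝ) * ((∏ j ∈ Finset.univ.erase i, c j : ℤ) : ℝ) := by
        rw [hC, ← Finset.mul_prod_erase Finset.univ c (Finset.mem_univ i)]
        push_cast
        ring
      rw [this, mul_assoc, mul_comm ((∏ j ∈ Finset.univ.erase i, c j : ℤ) : ℝ), ← mul_assoc]
      exact S.mul_mem (hcS i) (intCast_mem S _)
    rcases Int.natAbs_eq C with h | h
    · rw [hN, ← Int.cast_natCast (R := ℝ), ← h]; exact h1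
    · have : ((N : ℤ) : ℝ) = -(C : ℝ) := by
        rw [show (N : ℤ) = -C from by omega]
        push_cast; ring
      rw [← Int.cast_natCast (R := ℝ), this, neg_mul]
      exact S.neg_mem h1
  have hmemN : ∀ x ∈ Γ, (N : ℝ) • (reflMatrix γ *ᵥ x) ∈ Γ := by
    intro x hx
    rw [hmem] at hx
    obtain ⟨e, he, rfl⟩ := hx
    have hlin : reflMatrix γ *ᵥ (∑ i, e i • b i) = ∑ i, e i • (reflMatrix γ *ᵥ b i) := by
      rw [← Matrix.mulVecLin_apply, map_sum]
      exact Finset.sum_congr rfl fun i _ => by rw [_root_.map_smul, Matrix.mulVecLin_apply]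
    rw [hlin, Finset.smul_sum]
    refine AddSubgroup.sum_mem _ fun i _ => ?_
    have h2 : (N : ℝ) • (e i • (reflMatrix γ *ᵥ b i)) = e i • ((N : ℝ) • (reflMatrix γ *ᵥ b i)) :=
      smul_comm _ _ _
    rw [h2]
    refine smul_mem_Γ S Γ b hmem (he i) ?_
    rw [reflMatrix_mulVec, smul_sub, smul_smul]
    refine AddSubgroup.sub_mem _ (smul_mem_Γ S Γ b hmem (natCast_mem S N) (basis_mem S Γ b hmem i))
      (smul_mem_Γ S Γ b hmem ?_ hγ)
    exact hNS i
  constructor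
  · exact ⟨N, hN0, hmemN⟩
  · refine ⟨N, hN0, fun x hx => ⟨(N : ℝ) • (reflMatrix γ *ᵥ x), hmemN x hx, ?_⟩⟩
    rw [mulVec_smul, mulVec_mulVec, reflMatrix_mul_self hq, one_mulVec]
end

section
variable {n : ℕ} (S : Subring ℝ) (K : Subfield ℝ) (Γ : AddSubgroup (Fin n → ℝ))
    (b : Fin n → (Fin n → ℝ))

lemma induction_core (hS : Module.Finite ℤ ↥S)
    (hK : ∀ x : ℝ, x ∈ K ↔ ∃ a b : ℝ, a ∈ S ∧ b ∈ S ∧ b ≠ 0 ∧ x = a / b)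
    (hspan : Submodule.span ℝ (Set.range b) = ⊤)
    (hmem : ∀ x, x ∈ Γ ↔ ∃ c : Fin n → ℝ, (∀ i, c i ∈ S) ∧ x = ∑ i, c i • b i)
    (hΓK : ∀ γ ∈ Γ, dotProduct γ γ ∈ K) :
    ∀ d : ℕ, d ≤ n → ∀ Q : Matrix (Fin n) (Fin n) ℝ,
      Q ∈ Matrix.orthogonalGroup (Fin n) ℝ → GoodPair Γ Q →
      (∀ i : Fin n, d ≤ (i : ℕ) → Q *ᵥ b i = b i) →
      ∃ k : ℕ, k ≤ d ∧ ∃ g : Fin k → (Fin n → ℝ), (∀ i, g i ∈ Γ ∧ g i ≠ 0) ∧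
        Q = (List.ofFn fun i => reflMatrix (g i)).prod := by
  intro d
  induction d with
  | zero =>
    intro _ Q _ _ hfix
    refine ⟨0, le_rfl, Fin.elim0, fun i => i.elim0, ?_⟩
    rw [eq_one_of_fix hspan fun i => hfix i (Nat.zero_le _)]
    simp
  | succ d ih =>
    intro hdn Q horth hgp hfix
    have hd : d < n := by omega
    set i₀ : Fin n := ⟨d, hd⟩ with hi₀
    have hvali₀ : (i₀ : ℕ) = d := rfl
    by_cases hQfix : Q *ᵥ b i₀ = b i₀
    · obtain ⟨k, hk, g, hg, hQ⟩ := ih (by omega) Q horth hgp (fun i hi => by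
        rcases Nat.lt_or_ge (i : ℕ) (d + 1) with h | h
        · have : i = i₀ := Fin.ext (by omega)
          rw [this]; exact hQfix
        · exact hfix i h)
      exact ⟨k, by omega, g, hg, hQ⟩
    · obtain ⟨c, hc0, h1⟩ := hgp.1
      set v : Fin n → ℝ := Q *ᵥ b i₀ with hv
      have hbΓ : b i₀ ∈ Γ := basis_mem S Γ b hmem i₀
      have hvΓ : (c : ℝ) • v ∈ Γ := h1 _ hbΓ
      set γ : Fin n → ℝ := (c : ℝ) • v - (c : ℝ) • b i₀ with hγdef
      have hγΓ : γ ∈ Γ := AddSubgroup.sub_mem _ hvΓ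
        (smul_mem_Γ S Γ b hmem (natCast_mem S c) hbΓ)
      have hcR : (c : ℝ) ≠ 0 := Nat.cast_ne_zero.mpr hc0
      have hγ0 : γ ≠ 0 := by
        rw [hγdef, sub_ne_zero]
        intro h
        exact hQfix (smul_right_injective (Fin n → ℝ) hcR h)
      have hq : γ ⬝ᵥ γ ≠ 0 := fun h => hγ0 (dotProduct_self_eq_zero.mp h)
      set R := reflMatrix γ with hR
      -- dot product computations
      have hvv : v ⬝ᵥ v = b i₀ ⬝ᵥ b i₀ := orth_dot horth (b i₀) (b i₀)
      set E : ℝ := v ⬝ᵥ v - b i₀ ⬝ᵥ v with hE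
      have hγv : γ ⬝ᵥ v = c * E := by
        rw [hγdef, sub_dotProduct, smul_dotProduct, smul_dotProduct]
        simp [hE]; ring
      have hγγ : γ ⬝ᵥ γ = 2 * c ^ 2 * E := by
        rw [hγdef, sub_dotProduct, smul_dotProduct, smul_dotProduct,
          dotProduct_sub, dotProduct_sub, dotProduct_smul, dotProduct_smul,
          dotProduct_smul, dotProduct_smul, dotProduct_comm v (b i₀), ← hvv]
        simp [hE]; ring
      have hE0 : E ≠ 0 := by
        intro h; apply hq; rw [hγγ, h]; ring
      have hRv : R *ᵥ v = b i₀ := by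
        rw [hR, reflMatrix_mulVec γ v, hγv, hγγ]
        have hcoeff : 2 * (c * E) / (2 * c ^ 2 * E) = 1 / c := by
          field_simp
        rw [hcoeff, hγdef, smul_sub, smul_smul, smul_smul]
        have : (1 / (c:ℝ)) * c = 1 := by field_simp
        rw [this, one_smul, one_smul]
        abel
      have hRfix : ∀ i : Fin n, d + 1 ≤ (i : ℕ) → R *ᵥ b i = b i := by
        intro i hi
        have hvbi : v ⬝ᵥ b i = b i₀ ⬝ᵥ b i := by
          conv_lhs => rw [hv, ← hfix i hi]
          exact orth_dot horth (b i₀) (b i)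
        have hγbi : γ ⬝ᵥ b i = 0 := by
          rw [hγdef, sub_dotProduct, smul_dotProduct, smul_dotProduct, hvbi]
          ring
        rw [hR, reflMatrix_mulVec γ (b i), hγbi]
        simp
      have horthR : R ∈ Matrix.orthogonalGroup (Fin n) ℝ := reflMatrix_mem_orthogonal hq
      have hgpR : GoodPair Γ R := refl_goodPair S K Γ b hS hK hmem hΓK hγΓ hγ0
      have hRQfix : ∀ i : Fin n, d ≤ (i : ℕ) → (R * Q) *ᵥ b i = b i := by
        intro i hi
        rw [← mulVec_mulVec]
        rcases Nat.lt_or_ge (i : ℕ) (d + 1) with h | h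
        · have : i = i₀ := Fin.ext (by omega)
          rw [this, ← hv, hRv]
        · rw [hfix i h, hRfix i h]
      obtain ⟨k, hk, g, hg, hRQ⟩ := ih (by omega) (R * Q) (mul_mem horthR horth)
        (goodPair_mul hgpR hgp) hRQfix
      set g' : Fin (k + 1) → (Fin n → ℝ) := Fin.cons γ g with hg'
      refine ⟨k + 1, by omega, g', fun i => ?_, ?_⟩
      · refine Fin.cases ?_ ?_ i
        · exact ⟨hγΓ, hγ0⟩
        · intro j; simpa [hg'] using hg j
      · have hQeq : Q = R * (R * Q) := by
          rw [← mul_assoc, reflMatrix_mul_self hq, one_mul]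
        rw [hQeq, hRQ]
        have : (List.ofFn fun i : Fin (k + 1) => reflMatrix (g' i)) =
            reflMatrix γ :: List.ofFn fun i : Fin k => reflMatrix (g i) := by
          rw [List.ofFn_succ]
          simp [hg']
        rw [this, List.prod_cons]
end

theorem stmt18 {n : ℕ} (S : Subring ℝ) (hS : Module.Finite ℤ S)
    (K : Subfield ℝ)
    (hK : ∀ x : ℝ, x ∈ K ↔ ∃ a b : ℝ, a ∈ S ∧ b ∈ S ∧ b ≠ 0 ∧ x = a / b)
    (Γ : AddSubgroup (Fin n → ℝ)) (b : Fin n → (Fin n → ℝ)) (hb : IsSBasisOf S b Γ)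
    (hΓK : ∀ γ ∈ Γ, dotProduct γ γ ∈ K) :
    (∀ γ ∈ Γ, γ ≠ 0 → IsCoincidenceIsometry Γ (reflMatrix γ)) ∧
    ∀ Q : Matrix (Fin n) (Fin n) ℝ, IsCoincidenceIsometry Γ Q →
      IsProdOfAtMostNCoincReflections Γ Q := by
  obtain ⟨hlin, hspan, hmem⟩ := hb
  have hfg : AddGroup.FG ↥Γ := gamma_fg S Γ b hmem hS
  constructor
  · intro γ hγ hγ0
    have hq : γ ⬝ᵥ γ ≠ 0 := fun h => hγ0 (dotProduct_self_eq_zero.mp h)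
    rw [coincidence_iff_goodPair Γ hfg]
    exact ⟨reflMatrix_mem_orthogonal hq, refl_goodPair S K Γ b hS hK hmem hΓK hγ hγ0⟩
  · intro Q hQ
    rw [coincidence_iff_goodPair Γ hfg] at hQ
    obtain ⟨k, hk, g, hg, heq⟩ := induction_core S K Γ b hS hK hspan hmem hΓK n le_rfl Q
      hQ.1 hQ.2 (fun i hi => absurd hi (Nat.not_le.mpr i.isLt))
    exact ⟨k, hk, g, hg, heq⟩
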